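/- Let C ≠ 0 and b be real constants and set f(u) = C·(u+b)⁴. Let u(t,x) be a smooth real-valued solution of the gKN equation with f, such that u_x(t,x) ≠ 0 for all (t,x). Then the function P(t,x) = (u(t,x)+b)² satisfies the symmetry determining equation ∂_t P − ∂_x³ P + 3(u_xx/u_x)∂_x² P − (3/2)(u_xx²/u_x²)∂_x P + (f(u)/u_x²)∂_x P − (f'(u)/u_x)P = 0 at every point (t,x). (This is the extra point symmetry X_{4f} = (u+b)²∂_u admitted by the gKN equation in the case f(u) = C(u+b)⁴.) -/

import Mathlib

open Real

/-- Partial derivative with respect to the second (spatial) variable. -/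
noncomputable def pdx (u : ℝ → ℝ → ℝ) : ℝ → ℝ → ℝ := fun t x => deriv (fun y => u t y) x

/-- Partial derivative with respect to the first (time) variable. -/
noncomputable def pdt (u : ℝ → ℝ → ℝ) : ℝ → ℝ → ℝ := fun t x => deriv (fun s => u s x) t

/-- `u` solves the generalized Krichever-Novikov equation with nonlinearity `f`:
`u_t = u_xxx - (3/2) u_xx^2/u_x + f(u)/u_x`. -/
def isGKN (f : ℝ → ℝ) (u : ℝ → ℝ → ℝ) : Prop :=
  ∀ t x, pdt u t x =
    pdx (pdx (pdx u)) t x - (3/2) * (pdx (pdx u) t x)^2 / pdx u t x + f (u t x) / pdx u t x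

/-- The symmetry determining equation for a characteristic function `P` along `u`:
`∂_t P - ∂_x^3 P + 3 (u_xx/u_x) ∂_x^2 P - (3/2)(u_xx^2/u_x^2) ∂_x P + (f(u)/u_x^2) ∂_x P
 - (f'(u)/u_x) P = 0`. -/
def symmDet (f : ℝ → ℝ) (u P : ℝ → ℝ → ℝ) : Prop :=
  ∀ t x,
    pdt P t x - pdx (pdx (pdx P)) t x
      + 3 * (pdx (pdx u) t x / pdx u t x) * pdx (pdx P) t x
      - (3/2) * ((pdx (pdx u) t x)^2 / (pdx u t x)^2) * pdx P t x
      + (f (u t x) / (pdx u t x)^2) * pdx P t x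
      - (deriv f (u t x) / pdx u t x) * P t x = 0

/-- Extra point symmetry `X₄f = (u+b)² ∂_u` of the gKN equation with `f(u) = C (u+b)⁴`:
its characteristic `P = (u+b)²` satisfies the symmetry determining equation. -/
theorem gKN_point_symmetry_X4f (C b : ℝ) (hC : C ≠ 0)
    (u : ℝ → ℝ → ℝ) (hu : ContDiff ℝ (⊤ : ℕ∞) (Function.uncurry u))
    (hux : ∀ t x, pdx u t x ≠ 0)
    (hsol : isGKN (fun v => C * (v + b)^4) u) :
    symmDet (fun v => C * (v + b)^4) u (fun t x => (u t x + b)^2) := by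
  intro t x
  set g : ℝ → ℝ := u t with hgdef
  have hg : ContDiff ℝ (⊤ : ℕ∞) g := hu.comp (ContDiff.prodMk contDiff_const contDiff_id)
  have hd1 : ContDiff ℝ (⊤ : ℕ∞) (deriv g) := hg.iterate_deriv 1
  have hd2 : ContDiff ℝ (⊤ : ℕ∞) (deriv (deriv g)) := hd1.iterate_deriv 1
  have Dg : Differentiable ℝ g := hg.differentiable (by simp)
  have Dd1 : Differentiable ℝ (deriv g) := hd1.differentiable (by simp)
  have Dd2 : Differentiable ℝ (deriv (deriv g)) := hd2.differentiable (by simp)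
  -- first x-derivative of P
  have hP1 : ∀ y, pdx (fun t x => (u t x + b)^2) t y = 2 * (g y + b) * deriv g y := by
    intro y
    have h := (((Dg y).hasDerivAt.add_const b).pow 2).deriv
    simp only [pdx]
    rw [show (fun y => (u t y + b)^2) = (fun x => g x + b) ^ 2 from rfl, h]; ring
  have hP1f : (fun y => pdx (fun t x => (u t x + b)^2) t y)
      = fun y => 2 * (g y + b) * deriv g y := funext hP1
  -- second x-derivative of P
  have hP2 : ∀ y, pdx (pdx (fun t x => (u t x + b)^2)) t y
      = 2 * (deriv g y)^2 + 2 * (g y + b) * deriv (deriv g) y := by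
    intro y
    have h := ((((Dg y).hasDerivAt.add_const b).const_mul 2).mul (Dd1 y).hasDerivAt).deriv
    show deriv (fun z => pdx (fun t x => (u t x + b)^2) t z) y = _
    rw [hP1f]
    have : (fun z => 2 * (g z + b) * deriv g z) = (fun z => (2 * (g z + b))) * deriv g := rfl
    rw [this, h]; ring
  have hP2f : (fun y => pdx (pdx (fun t x => (u t x + b)^2)) t y)
      = fun y => 2 * (deriv g y)^2 + 2 * (g y + b) * deriv (deriv g) y := funext hP2
  -- third x-derivative of P
  have hP3 : pdx (pdx (pdx (fun t x => (u t x + b)^2))) t x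
      = 6 * deriv g x * deriv (deriv g) x + 2 * (g x + b) * deriv (deriv (deriv g)) x := by
    have h1 : HasDerivAt (fun z => 2 * (deriv g z)^2)
        (2 * (2 * deriv g x ^ 1 * deriv (deriv g) x)) x :=
      (((Dd1 x).hasDerivAt).pow 2).const_mul 2
    have h2 : HasDerivAt (fun z => (2 * (g z + b)) * deriv (deriv g) z)
        ((2 * deriv g x) * deriv (deriv g) x + (2 * (g x + b)) * deriv (deriv (deriv g)) x) x :=
      (((Dg x).hasDerivAt.add_const b).const_mul 2).mul (Dd2 x).hasDerivAt
    have h := (h1.add h2).deriv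
    show deriv (fun z => pdx (pdx (fun t x => (u t x + b)^2)) t z) x = _
    rw [hP2f]
    have : (fun z => 2 * (deriv g z)^2 + 2 * (g z + b) * deriv (deriv g) z)
        = (fun z => 2 * (deriv g z)^2) + (fun z => (2 * (g z + b)) * deriv (deriv g) z) := rfl
    rw [this, h]; ring
  -- t-derivative of P
  have hsx : ContDiff ℝ (⊤ : ℕ∞) (fun s => u s x) := hu.comp (ContDiff.prodMk contDiff_id contDiff_const)
  have hPt : pdt (fun t x => (u t x + b)^2) t x = 2 * (u t x + b) * pdt u t x := by
    have h := (((hsx.differentiable (by simp) t).hasDerivAt.add_const b).pow 2).deriv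
    simp only [pdt]
    rw [show (fun s => (u s x + b)^2) = (fun s => u s x + b) ^ 2 from rfl, h]; ring
  -- derivative of f
  have hf' : deriv (fun v => C * (v + b)^4) (u t x) = 4 * C * (u t x + b)^3 := by
    have h := ((((hasDerivAt_id (u t x)).add_const b).pow 4).const_mul C).deriv
    simp only [id_eq, Pi.pow_apply] at h
    rw [h]; push_cast; ring
  -- relate pdx iterates of u to derivs of g
  have e1 : pdx u t x = deriv g x := rfl
  have e2 : pdx (pdx u) t x = deriv (deriv g) x := by
    show deriv (fun z => pdx u t z) x = _; rfl
  have e3 : pdx (pdx (pdx u)) t x = deriv (deriv (deriv g)) x := by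
    show deriv (fun z => pdx (pdx u) t z) x = _
    have : (fun z => pdx (pdx u) t z) = deriv (deriv g) := rfl
    rw [this]
  have hgx : g x = u t x := rfl
  have hsol' := hsol t x
  rw [e1, e2, e3] at hsol'
  rw [hPt, hP3, hP2 x, hP1 x, hf', e1, e2, hsol', hgx]
  have hw : deriv g x ≠ 0 := e1 ▸ hux t x
  field_simp
  ring
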